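/- arXiv:1409.8566 — 4 statements merged into one kernel-verified Lean document; each statement's English description precedes it below -/
import Mathlib

section
/- Let a = (a_1,…,a_n) be a vector of positive integers. Then the poset of faces of the Tesler polytope Tes_n(a), ordered by inclusion, is order-isomorphic to the product poset ∏_{k=1}^{n} P_k, where P_k is the poset of nonempty subsets of a k-element set ordered by inclusion (equivalently, the face poset of Tes_n(a) is isomorphic to the face poset of the Cartesian product of simplices Δ_1 × Δ_2 × ⋯ × Δ_{n−1}). -/
open Finset

/-- The Tesler polytope `Tes_n(a)`: upper triangular `n × n` matrices with nonnegative
real entries whose `k`-th hook sum equals `a k`.  Entries strictly below the diagonal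
are required to be `0`. -/
def TeslerPolytope (n : ℕ) (a : Fin n → ℕ) : Set (Fin n → Fin n → ℝ) :=
  {x | (∀ i j : Fin n, j < i → x i j = 0) ∧
       (∀ i j : Fin n, i ≤ j → 0 ≤ x i j) ∧
       (∀ k : Fin n,
         (∑ j ∈ univ.filter (fun j => k ≤ j), x k j)
           - (∑ i ∈ univ.filter (fun i => i < k), x i k) = (a k : ℝ))}

namespace TeslerAux

variable {n : ℕ}

/-- The row of the matrix corresponding to index `k` (an involution on `Fin n`). -/
def row (k : Fin n) : Fin n := ⟨n - 1 - (k : ℕ), by have := k.isLt; omega⟩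

lemma row_row (k : Fin n) : row (row k) = k := by
  have := k.isLt; apply Fin.ext; simp [row]; omega

/-- Embedding of `Fin (k+1)` into the entries of row `row k`. -/
def emb (k : Fin n) (j : Fin ((k : ℕ) + 1)) : Fin n :=
  ⟨n - 1 - (k : ℕ) + (j : ℕ), by have := k.isLt; have := j.isLt; omega⟩

lemma emb_val (k : Fin n) (j : Fin ((k : ℕ) + 1)) :
    (emb k j : ℕ) = (row k : ℕ) + (j : ℕ) := rfl

lemma row_le_emb (k : Fin n) (j : Fin ((k : ℕ) + 1)) : row k ≤ emb k j := by
  simp [Fin.le_def, emb, row]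

lemma emb_inj (k : Fin n) {j j' : Fin ((k : ℕ) + 1)} (h : emb k j = emb k j') : j = j' := by
  apply Fin.ext
  have := congrArg Fin.val h
  simp only [emb] at this
  omega

lemma cover (k : Fin n) (j : Fin n) (h : row k ≤ j) :
    ∃ j' : Fin ((k : ℕ) + 1), emb k j' = j := by
  have hk := k.isLt; have hj := j.isLt
  have h' : (row k : ℕ) ≤ (j : ℕ) := h
  refine ⟨⟨(j : ℕ) - (row k : ℕ), by simp only [row] at h' ⊢; omega⟩, ?_⟩
  apply Fin.ext
  simp only [emb, row] at h' ⊢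
  omega

/-- The index type for face data: a nonempty subset per `k`. -/
abbrev TT (n : ℕ) := ∀ k : Fin n, {s : Finset (Fin ((k : ℕ) + 1)) // s.Nonempty}

/-- Whether the entry `(i, j)` is in the "support pattern" prescribed by `S`. -/
def inS (S : TT n) (i j : Fin n) : Prop :=
  ∃ j' ∈ (S (row i)).1, (i : ℕ) + (j' : ℕ) = (j : ℕ)

instance (S : TT n) (i j : Fin n) : Decidable (inS S i j) := by
  unfold inS; infer_instance

lemma inS_le {S : TT n} {i j : Fin n} (h : inS S i j) : i ≤ j := by
  obtain ⟨j', _, hj'⟩ := h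
  exact Fin.le_def.2 (by omega)

lemma inS_emb {S : TT n} {k : Fin n} {j' : Fin ((k : ℕ) + 1)} :
    inS S (row k) (emb k j') ↔ j' ∈ (S k).1 := by
  unfold inS
  rw [row_row]
  constructor
  · rintro ⟨j'', hm, he⟩
    have : (j'' : ℕ) = (j' : ℕ) := by
      rw [emb_val] at he; omega
    rwa [show j'' = j' from Fin.ext this] at hm
  · intro hm
    exact ⟨j', hm, (emb_val k j').symm⟩

/-- The candidate face determined by a support pattern `S`. -/
def Face (a : Fin n → ℕ) (S : TT n) : Set (Fin n → Fin n → ℝ) :=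
  {x ∈ TeslerPolytope n a | ∀ i j : Fin n, i ≤ j → ¬ inS S i j → x i j = 0}

section basic

variable {a : Fin n → ℕ}

lemma hook_sum {x : Fin n → Fin n → ℝ} (hx : x ∈ TeslerPolytope n a) (i : Fin n) :
    ∑ j ∈ univ.filter (fun j => i ≤ j), x i j
      = (a i : ℝ) + ∑ i' ∈ univ.filter (fun i' => i' < i), x i' i := by
  have := hx.2.2 i; linarith

lemma exists_pos_row (ha : ∀ i, 0 < a i) {x : Fin n → Fin n → ℝ}
    (hx : x ∈ TeslerPolytope n a) (i : Fin n) : ∃ j, i ≤ j ∧ 0 < x i j := by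
  by_contra h
  push_neg at h
  have h1 : ∑ j ∈ univ.filter (fun j => i ≤ j), x i j ≤ 0 :=
    Finset.sum_nonpos (fun j hj => h j (mem_filter.1 hj).2)
  have h2 : 0 ≤ ∑ i' ∈ univ.filter (fun i' => i' < i), x i' i :=
    Finset.sum_nonneg (fun i' hi' => hx.2.1 i' i (le_of_lt (mem_filter.1 hi').2))
  have h3 := hook_sum hx i
  have h4 : (0 : ℝ) < (a i : ℝ) := by exact_mod_cast ha i
  linarith

end basic

section witness

variable (a : Fin n → ℕ) (S : TT n)

/-- Build the witness matrix row by row: `wit m` has rows `0, …, m-1` filled in. -/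
noncomputable def wit : ℕ → Fin n → Fin n → ℝ
  | 0 => 0
  | (m + 1) => fun i j =>
      if (i : ℕ) = m then
        (if inS S i j then
          ((a i : ℝ) + ∑ i' ∈ univ.filter (fun i' => i' < i), wit m i' i)
            / (S (row i)).1.card
        else 0)
      else wit m i j

lemma wit_stable : ∀ {m m' : ℕ}, m ≤ m' → ∀ i j : Fin n, (i : ℕ) < m →
    wit a S m' i j = wit a S m i j := by
  intro m m' h
  induction m' with
  | zero =>
    intro i j hi
    exact absurd hi (by omega)
  | succ m'' ih =>
    intro i j hi
    rcases Nat.eq_or_lt_of_le h with h' | h'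
    · rw [h']
    · have hm : m ≤ m'' := by omega
      have : (i : ℕ) ≠ m'' := by omega
      show (if (i : ℕ) = m'' then _ else wit a S m'' i j) = _
      rw [if_neg this, ih hm i j hi]

/-- The witness point for the support pattern `S`. -/
noncomputable def wt : Fin n → Fin n → ℝ := wit a S n

lemma wt_eq (i j : Fin n) :
    wt a S i j = if inS S i j then
        ((a i : ℝ) + ∑ i' ∈ univ.filter (fun i' => i' < i), wt a S i' i)
          / (S (row i)).1.card
      else 0 := by
  have h1 : wt a S i j = wit a S ((i : ℕ) + 1) i j :=
    wit_stable a S i.isLt i j (Nat.lt_succ_self _)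
  rw [h1]
  show (if (i : ℕ) = (i : ℕ) then _ else _) = _
  rw [if_pos rfl]
  have hs : ∑ i' ∈ univ.filter (fun i' => i' < i), wit a S (i : ℕ) i' i
      = ∑ i' ∈ univ.filter (fun i' => i' < i), wt a S i' i := by
    apply Finset.sum_congr rfl
    intro i' hi'
    have : (i' : ℕ) < (i : ℕ) := (mem_filter.1 hi').2
    exact (wit_stable a S i.isLt.le i' i this).symm
  rw [hs]

lemma wt_nonneg_aux : ∀ (m : ℕ) (i j : Fin n), (i : ℕ) < m → 0 ≤ wt a S i j := by
  intro m
  induction m with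
  | zero => intro i j hi; omega
  | succ m ih =>
    intro i j hi
    rw [wt_eq]
    split
    · apply div_nonneg
      · have hsum : 0 ≤ ∑ i' ∈ univ.filter (fun i' => i' < i), wt a S i' i :=
          Finset.sum_nonneg (fun i' hi' => by
            have : (i' : ℕ) < (i : ℕ) := (mem_filter.1 hi').2
            exact ih i' i (by omega))
        positivity
      · positivity
    · exact le_rfl

lemma wt_nonneg (i j : Fin n) : 0 ≤ wt a S i j :=
  wt_nonneg_aux a S ((i : ℕ) + 1) i j (Nat.lt_succ_self _)

lemma wt_pos (ha : ∀ i, 0 < a i) (i j : Fin n) (h : inS S i j) : 0 < wt a S i j := by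
  rw [wt_eq, if_pos h]
  apply div_pos
  · have hsum : 0 ≤ ∑ i' ∈ univ.filter (fun i' => i' < i), wt a S i' i :=
      Finset.sum_nonneg (fun i' _ => wt_nonneg a S i' i)
    have : (0 : ℝ) < (a i : ℝ) := by exact_mod_cast ha i
    linarith
  · exact_mod_cast (S (row i)).2.card_pos

lemma wt_zero (i j : Fin n) (h : ¬ inS S i j) : wt a S i j = 0 := by
  rw [wt_eq, if_neg h]

lemma card_inS (i : Fin n) :
    (univ.filter (fun j => inS S i j)).card = (S (row i)).1.card := by
  symm
  apply Finset.card_bij (fun j' _ => emb (row i) j')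
  · intro j' hj'
    simp only [mem_filter, mem_univ, true_and]
    have h := inS_emb (S := S) (k := row i) (j' := j') |>.2 hj'
    rwa [row_row] at h
  · intro j₁ h₁ j₂ h₂ he
    exact emb_inj (row i) he
  · intro j hj
    simp only [mem_filter, mem_univ, true_and] at hj
    obtain ⟨j', hm, he⟩ := hj
    refine ⟨j', hm, ?_⟩
    apply Fin.ext
    rw [emb_val, row_row]
    exact he

lemma wt_row_sum (i : Fin n) :
    ∑ j ∈ univ.filter (fun j => i ≤ j), wt a S i j
      = (a i : ℝ) + ∑ i' ∈ univ.filter (fun i' => i' < i), wt a S i' i := by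
  set c : ℝ := (a i : ℝ) + ∑ i' ∈ univ.filter (fun i' => i' < i), wt a S i' i with hc
  have h1 : ∀ j ∈ univ.filter (fun j => i ≤ j), wt a S i j =
      if inS S i j then c / (S (row i)).1.card else 0 := by
    intro j _; rw [wt_eq]
  rw [Finset.sum_congr rfl h1, ← Finset.sum_filter, Finset.filter_filter]
  have h2 : univ.filter (fun j => i ≤ j ∧ inS S i j) = univ.filter (fun j => inS S i j) := by
    apply Finset.filter_congr
    intro j _
    exact ⟨fun h => h.2, fun h => ⟨inS_le h, h⟩⟩
  rw [h2, Finset.sum_const, card_inS, nsmul_eq_mul]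
  have hcard : ((S (row i)).1.card : ℝ) ≠ 0 := by
    exact_mod_cast (S (row i)).2.card_pos.ne'
  field_simp

lemma wt_mem : wt a S ∈ TeslerPolytope n a := by
  refine ⟨?_, ?_, ?_⟩
  · intro i j hji
    apply wt_zero
    intro h
    have := inS_le h
    exact absurd (lt_of_le_of_lt this hji) (lt_irrefl _)
  · intro i j _; exact wt_nonneg a S i j
  · intro k
    rw [wt_row_sum]
    ring

lemma wt_mem_face : wt a S ∈ Face a S :=
  ⟨wt_mem a S, fun i j _ h => wt_zero a S i j h⟩

end witness

section exposed

variable (a : Fin n → ℕ) (S : TT n)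

/-- The positions forced to be zero on the face `Face a S`. -/
def badset : Finset (Fin n × Fin n) :=
  univ.filter (fun p => p.1 ≤ p.2 ∧ ¬ inS S p.1 p.2)

/-- The exposing functional for `Face a S`. -/
noncomputable def lfun : (Fin n → Fin n → ℝ) →L[ℝ] ℝ :=
  - ∑ p ∈ badset S, ((ContinuousLinearMap.proj p.2).comp
      (ContinuousLinearMap.proj (R := ℝ) (φ := fun _ : Fin n => Fin n → ℝ) p.1))

lemma lfun_apply (x : Fin n → Fin n → ℝ) :
    lfun S x = - ∑ p ∈ badset S, x p.1 p.2 := by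
  simp [lfun, ContinuousLinearMap.sum_apply]

lemma lfun_nonpos {x : Fin n → Fin n → ℝ} (hx : x ∈ TeslerPolytope n a) :
    lfun S x ≤ 0 := by
  rw [lfun_apply]
  simp only [neg_nonpos]
  apply Finset.sum_nonneg
  intro p hp
  exact hx.2.1 p.1 p.2 ((mem_filter.1 hp).2.1)

lemma lfun_eq_zero_iff {x : Fin n → Fin n → ℝ} (hx : x ∈ TeslerPolytope n a) :
    lfun S x = 0 ↔ x ∈ Face a S := by
  rw [lfun_apply, neg_eq_zero]
  rw [Finset.sum_eq_zero_iff_of_nonneg (fun p hp => hx.2.1 p.1 p.2 ((mem_filter.1 hp).2.1))]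
  constructor
  · intro h
    refine ⟨hx, fun i j hij hns => ?_⟩
    exact h (i, j) (by simp [badset, hij, hns])
  · rintro ⟨-, h⟩ p hp
    have := (mem_filter.1 hp).2
    exact h p.1 p.2 this.1 this.2

lemma face_eq_exposed_set (ha : ∀ i, 0 < a i) :
    Face a S = {x ∈ TeslerPolytope n a |
      ∀ y ∈ TeslerPolytope n a, lfun S y ≤ lfun S x} := by
  ext x
  constructor
  · intro hx
    refine ⟨hx.1, fun y hy => ?_⟩
    rw [(lfun_eq_zero_iff a S hx.1).2 hx]
    exact lfun_nonpos a S hy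
  · rintro ⟨hx, hmax⟩
    refine (lfun_eq_zero_iff a S hx).1 ?_
    have h1 := hmax (wt a S) (wt_mem a S)
    rw [(lfun_eq_zero_iff a S (wt_mem a S)).2 (wt_mem_face a S)] at h1
    exact le_antisymm (lfun_nonpos a S hx) h1

lemma face_isExposed (ha : ∀ i, 0 < a i) :
    IsExposed ℝ (TeslerPolytope n a) (Face a S) :=
  fun _ => ⟨lfun S, face_eq_exposed_set a S ha⟩

end exposed

section support

variable {a : Fin n → ℕ}

/-- The support pattern of a set of matrices. -/
noncomputable def suppRaw (F : Set (Fin n → Fin n → ℝ)) (k : Fin n) :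
    Finset (Fin ((k : ℕ) + 1)) :=
  @Finset.filter _ (fun j' => ∃ x ∈ F, x (row k) (emb k j') ≠ 0)
    (Classical.decPred _) univ

lemma mem_suppRaw {F : Set (Fin n → Fin n → ℝ)} {k : Fin n} {j' : Fin ((k : ℕ) + 1)} :
    j' ∈ suppRaw F k ↔ ∃ x ∈ F, x (row k) (emb k j') ≠ 0 := by
  rw [suppRaw]
  exact (@Finset.mem_filter _ _ (Classical.decPred _) univ j').trans
    ⟨fun h => h.2, fun h => ⟨mem_univ _, h⟩⟩

lemma suppRaw_nonempty (ha : ∀ i, 0 < a i) {F : Set (Fin n → Fin n → ℝ)}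
    (hne : F.Nonempty) (hsub : F ⊆ TeslerPolytope n a) (k : Fin n) :
    (suppRaw F k).Nonempty := by
  obtain ⟨x, hx⟩ := hne
  obtain ⟨j, hj, hpos⟩ := exists_pos_row ha (hsub hx) (row k)
  obtain ⟨j', hj'⟩ := cover k j hj
  refine ⟨j', mem_suppRaw.2 ⟨x, hx, ?_⟩⟩
  rw [hj']
  exact ne_of_gt hpos

/-- Translation: `inS` of the support pattern. -/
lemma inS_suppRaw {F : Set (Fin n → Fin n → ℝ)} (hS : ∀ k, (suppRaw F k).Nonempty)
    {i j : Fin n} (hij : i ≤ j) :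
    inS (fun k => ⟨suppRaw F k, hS k⟩) i j ↔ ∃ y ∈ F, y i j ≠ 0 := by
  constructor
  · rintro ⟨j', hm, he⟩
    rw [mem_suppRaw] at hm
    obtain ⟨y, hy, hne⟩ := hm
    refine ⟨y, hy, ?_⟩
    have h1 : emb (row i) j' = j := by
      apply Fin.ext; rw [emb_val, row_row]; exact he
    rwa [row_row, h1] at hne
  · rintro ⟨y, hy, hne⟩
    have hij' : row (row i) ≤ j := by rwa [row_row]
    obtain ⟨j', hj'⟩ := cover (row i) j hij'
    refine ⟨j', ?_, ?_⟩
    · rw [mem_suppRaw]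
      exact ⟨y, hy, by rw [hj', row_row]; exact hne⟩
    · have := congrArg Fin.val hj'
      rw [emb_val] at this
      have h2 : ((row (row i) : Fin n) : ℕ) = (i : ℕ) := congrArg Fin.val (row_row i)
      omega

end support

section main

variable {a : Fin n → ℕ}

lemma tes_convex : Convex ℝ (TeslerPolytope n a) := by
  intro x hx y hy p q hp hq hpq
  refine ⟨?_, ?_, ?_⟩
  · intro i j hji
    simp only [Pi.add_apply, Pi.smul_apply, smul_eq_mul, hx.1 i j hji, hy.1 i j hji,
      mul_zero, add_zero]
  · intro i j hij
    have h1 := hx.2.1 i j hij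
    have h2 := hy.2.1 i j hij
    simp only [Pi.add_apply, Pi.smul_apply, smul_eq_mul]
    nlinarith
  · intro k
    have h1 := hx.2.2 k
    have h2 := hy.2.2 k
    simp only [Pi.add_apply, Pi.smul_apply, smul_eq_mul]
    rw [Finset.sum_add_distrib, Finset.sum_add_distrib, ← Finset.mul_sum, ← Finset.mul_sum,
      ← Finset.mul_sum, ← Finset.mul_sum]
    linear_combination p * h1 + q * h2 + (a k : ℝ) * hpq

lemma face_mono {S S' : TT n} (h : ∀ k, (S k).1 ⊆ (S' k).1) : Face a S ⊆ Face a S' := by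
  rintro x ⟨hx, hzero⟩
  refine ⟨hx, fun i j hij hns => hzero i j hij ?_⟩
  rintro ⟨j', hm, he⟩
  exact hns ⟨j', h _ hm, he⟩

lemma suppRaw_face (ha : ∀ i, 0 < a i) (S : TT n) (k : Fin n) :
    suppRaw (Face a S) k = (S k).1 := by
  ext j'
  rw [mem_suppRaw]
  constructor
  · rintro ⟨x, hx, hne⟩
    by_contra hm
    exact hne (hx.2 (row k) (emb k j') (row_le_emb k j') (fun h => hm (inS_emb.1 h)))
  · intro hm
    exact ⟨wt a S, wt_mem_face a S,
      ne_of_gt (wt_pos a S ha (row k) (emb k j') (inS_emb.2 hm))⟩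

lemma exists_pos_point {F : Set (Fin n → Fin n → ℝ)} (hconv : Convex ℝ F)
    (hsub : F ⊆ TeslerPolytope n a) (hne : F.Nonempty) :
    ∃ x0 ∈ F, ∀ i j : Fin n, i ≤ j → (∃ y ∈ F, y i j ≠ 0) → 0 < x0 i j := by
  classical
  have key : ∀ (P : Finset (Fin n × Fin n)),
      (∀ p ∈ P, p.1 ≤ p.2 ∧ ∃ y ∈ F, y p.1 p.2 ≠ 0) →
      ∃ x0 ∈ F, ∀ p ∈ P, 0 < x0 p.1 p.2 := by
    intro P
    induction P using Finset.induction_on with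
    | empty =>
      intro _
      obtain ⟨x, hx⟩ := hne
      exact ⟨x, hx, by simp⟩
    | @insert p P hp ih =>
      intro hP
      obtain ⟨x0, hx0F, hx0⟩ := ih (fun q hq => hP q (mem_insert_of_mem hq))
      obtain ⟨hle, y, hyF, hy⟩ := hP p (mem_insert_self _ _)
      have hypos : 0 < y p.1 p.2 := lt_of_le_of_ne ((hsub hyF).2.1 _ _ hle) (Ne.symm hy)
      refine ⟨(1/2 : ℝ) • x0 + (1/2 : ℝ) • y,
        hconv hx0F hyF (by norm_num) (by norm_num) (by norm_num), ?_⟩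
      intro q hq
      rcases mem_insert.1 hq with rfl | hq'
      · have h0 : 0 ≤ x0 q.1 q.2 := (hsub hx0F).2.1 _ _ hle
        simp only [Pi.add_apply, Pi.smul_apply, smul_eq_mul]
        linarith
      · have h1 := hx0 q hq'
        have h2 : 0 ≤ y q.1 q.2 := (hsub hyF).2.1 _ _ (hP q hq).1
        simp only [Pi.add_apply, Pi.smul_apply, smul_eq_mul]
        linarith
  obtain ⟨x0, hx0F, hx0⟩ := key (univ.filter (fun p => p.1 ≤ p.2 ∧ ∃ y ∈ F, y p.1 p.2 ≠ 0))
    (fun p hp => (mem_filter.1 hp).2)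
  refine ⟨x0, hx0F, fun i j hij hex => ?_⟩
  exact hx0 (i, j) (mem_filter.2 ⟨mem_univ _, hij, hex⟩)

/-- The key convexity/perturbation step: if `x0` maximizes `l` on the polytope and `y`
is a point of the polytope whose support is contained in that of `x0`, then `y` also
maximizes `l`. -/
lemma lfun_le {x0 y : Fin n → Fin n → ℝ} (hx0 : x0 ∈ TeslerPolytope n a)
    (hy : y ∈ TeslerPolytope n a)
    (hsup : ∀ i j : Fin n, i ≤ j → x0 i j = 0 → y i j = 0)
    (l : (Fin n → Fin n → ℝ) →L[ℝ] ℝ)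
    (hmax : ∀ z ∈ TeslerPolytope n a, l z ≤ l x0) : l x0 ≤ l y := by
  classical
  set g : Fin n × Fin n → ℝ := fun p =>
    if h : 0 < y p.1 p.2 - x0 p.1 p.2 ∧ 0 < x0 p.1 p.2 then
      x0 p.1 p.2 / (y p.1 p.2 - x0 p.1 p.2) else 1 with hg
  have hgpos : ∀ p, 0 < g p := by
    intro p
    by_cases h : 0 < y p.1 p.2 - x0 p.1 p.2 ∧ 0 < x0 p.1 p.2
    · rw [show g p = x0 p.1 p.2 / (y p.1 p.2 - x0 p.1 p.2) from dif_pos h]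
      exact div_pos h.2 h.1
    · rw [show g p = 1 from dif_neg h]
      norm_num
  set E : Finset ℝ := insert (1 : ℝ) (univ.image g) with hE
  have hEne : E.Nonempty := ⟨1, mem_insert_self _ _⟩
  set ε : ℝ := E.min' hEne with hεdef
  have hεpos : 0 < ε := by
    rw [hεdef]
    apply (Finset.lt_min'_iff _ _).2
    intro b hb
    rcases mem_insert.1 hb with rfl | hb'
    · norm_num
    · obtain ⟨p, -, rfl⟩ := Finset.mem_image.1 hb'
      exact hgpos p
  have hεle : ∀ p : Fin n × Fin n, ε ≤ g p := fun p =>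
    Finset.min'_le _ _ (mem_insert_of_mem (Finset.mem_image_of_mem g (mem_univ p)))
  set z : Fin n → Fin n → ℝ := (1 + ε) • x0 - ε • y with hz
  have hzval : ∀ i j : Fin n, z i j = (1 + ε) * x0 i j - ε * y i j := by
    intro i j
    simp [hz, Pi.smul_apply, smul_eq_mul]
  have hzT : z ∈ TeslerPolytope n a := by
    refine ⟨?_, ?_, ?_⟩
    · intro i j hji
      rw [hzval, hx0.1 i j hji, hy.1 i j hji]
      ring
    · intro i j hij
      rw [hzval]
      rcases eq_or_lt_of_le (hx0.2.1 i j hij) with h0 | h0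
      · rw [hsup i j hij h0.symm, ← h0]
        norm_num
      · rcases le_or_gt (y i j) (x0 i j) with hyx | hyx
        · nlinarith
        · have hd : 0 < y i j - x0 i j := by linarith
          have h1 : ε ≤ x0 i j / (y i j - x0 i j) := by
            have h1' := hεle (i, j)
            rwa [show g (i, j) = x0 i j / (y i j - x0 i j) from dif_pos ⟨hd, h0⟩] at h1'
          have h2 : ε * (y i j - x0 i j) ≤ x0 i j := (le_div_iff₀ hd).1 h1
          nlinarith
    · intro k
      have h1 := hx0.2.2 k
      have h2 := hy.2.2 k
      have e1 : ∀ (s : Finset (Fin n)) (f : Fin n → Fin n → ℝ → ℝ), True := fun _ _ => trivial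
      have hsum1 : ∑ j ∈ univ.filter (fun j => k ≤ j), z k j
          = (1 + ε) * ∑ j ∈ univ.filter (fun j => k ≤ j), x0 k j
            - ε * ∑ j ∈ univ.filter (fun j => k ≤ j), y k j := by
        rw [Finset.mul_sum, Finset.mul_sum, ← Finset.sum_sub_distrib]
        exact Finset.sum_congr rfl (fun j _ => hzval k j)
      have hsum2 : ∑ i ∈ univ.filter (fun i => i < k), z i k
          = (1 + ε) * ∑ i ∈ univ.filter (fun i => i < k), x0 i k
            - ε * ∑ i ∈ univ.filter (fun i => i < k), y i k := by
        rw [Finset.mul_sum, Finset.mul_sum, ← Finset.sum_sub_distrib]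
        exact Finset.sum_congr rfl (fun i _ => hzval i k)
      rw [hsum1, hsum2]
      linear_combination (1 + ε) * h1 - ε * h2
  have h1 : l z ≤ l x0 := hmax z hzT
  have hlz : l z = (1 + ε) * l x0 - ε * l y := by
    rw [hz]
    simp [map_sub, map_smul, smul_eq_mul]
  rw [hlz] at h1
  nlinarith

lemma exposed_eq_face (ha : ∀ i, 0 < a i) {F : Set (Fin n → Fin n → ℝ)}
    (hne : F.Nonempty) (hexp : IsExposed ℝ (TeslerPolytope n a) F) :
    F = Face a (fun k => ⟨suppRaw F k, suppRaw_nonempty ha hne hexp.subset k⟩) := by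
  have hsub := hexp.subset
  have hS : ∀ k, (suppRaw F k).Nonempty := suppRaw_nonempty ha hne hsub
  apply Set.Subset.antisymm
  · intro x hx
    refine ⟨hsub hx, fun i j hij hns => ?_⟩
    by_contra hxne
    exact hns ((inS_suppRaw hS hij).2 ⟨x, hx, hxne⟩)
  · obtain ⟨l, hl⟩ := hexp hne
    have hFconv : Convex ℝ F := hexp.convex tes_convex
    obtain ⟨x0, hx0F, hx0⟩ := exists_pos_point hFconv hsub hne
    intro y hy
    rw [hl]
    have hx0' : x0 ∈ {x ∈ TeslerPolytope n a | ∀ y ∈ TeslerPolytope n a, l y ≤ l x} := by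
      rw [← hl]; exact hx0F
    have hsup : ∀ i j : Fin n, i ≤ j → x0 i j = 0 → y i j = 0 := by
      intro i j hij h0
      by_contra hyne
      have : inS (fun k => ⟨suppRaw F k, hS k⟩) i j → False := by
        intro hin
        obtain ⟨w, hwF, hwne⟩ := (inS_suppRaw hS hij).1 hin
        exact absurd h0 (ne_of_gt (hx0 i j hij ⟨w, hwF, hwne⟩))
      exact this (by
        by_contra hnot
        exact hyne (hy.2 i j hij hnot))
    refine ⟨hy.1, fun z hz => ?_⟩
    exact le_trans (hx0'.2 z hz) (lfun_le hx0'.1 hy.1 hsup l hx0'.2)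

end main

end TeslerAux

open TeslerAux

/-- For a vector `a` of positive integers, the poset of (nonempty, exposed) faces of
`Tes_n(a)` ordered by inclusion is order-isomorphic to the product over `k = 1, …, n`
of the posets of nonempty subsets of a `k`-element set ordered by inclusion
(equivalently, to the face poset of `Δ_1 × Δ_2 × ⋯ × Δ_{n-1}`). -/
theorem teslerPolytope_face_poset_product (n : ℕ) (a : Fin n → ℕ) (ha : ∀ i, 0 < a i) :
    Nonempty
      (({F : Set (Fin n → Fin n → ℝ) //
          F.Nonempty ∧ IsExposed ℝ (TeslerPolytope n a) F} ≃o
        (∀ k : Fin n, {s : Finset (Fin ((k : ℕ) + 1)) // s.Nonempty}))) := by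
  refine ⟨{ toFun := fun F => fun k => ⟨suppRaw F.1 k, suppRaw_nonempty ha F.2.1 F.2.2.subset k⟩
            invFun := fun S => ⟨Face a S, ⟨wt a S, wt_mem_face a S⟩, face_isExposed a S ha⟩
            left_inv := ?_
            right_inv := ?_
            map_rel_iff' := ?_ }⟩
  · rintro ⟨F, hne, hexp⟩
    exact Subtype.ext (exposed_eq_face ha hne hexp).symm
  · intro S
    funext k
    exact Subtype.ext (suppRaw_face ha S k)
  · intro F G
    constructor
    · intro h
      have hF := exposed_eq_face ha F.2.1 F.2.2
      have hG := exposed_eq_face ha G.2.1 G.2.2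
      show F.1 ⊆ G.1
      rw [hF, hG]
      apply face_mono
      intro k
      exact h k
    · intro h k
      show Subtype.mk (suppRaw F.1 k) _ ≤ ⟨suppRaw G.1 k, _⟩
      rw [Subtype.mk_le_mk]
      intro j' hj'
      rw [mem_suppRaw] at hj' ⊢
      obtain ⟨x, hx, hne⟩ := hj'
      exact ⟨x, h hx, hne⟩
end

section
/- For every n ≥ 1, the rational number identity C(n,2)! · 2^{C(n,2)} / ∏_{i=1}^n i! = f^{(n−1,n−2,…,1)} · ∏_{i=1}^{n−1} Cat(i) holds, where C(n,2) = n(n−1)/2, f^{(n−1,n−2,…,1)} = C(n,2)! / ∏_{k=1}^{n−1} (2k−1)^{n−k} is the number of standard Young tableaux of staircase shape (n−1, n−2, …, 1), and Cat(i) = (1/(i+1))·C(2i,i) is the i-th Catalan number. -/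
open Finset

lemma sc_key1 (n : ℕ) :
    2 ^ n * (∏ k ∈ Icc 1 n, (2 * k - 1)) * n.factorial = (2 * n).factorial := by
  induction n with
  | zero => simp
  | succ m ih =>
    rw [Finset.prod_Icc_succ_top (by omega)]
    have h3 : 2 * (m + 1) - 1 = 2 * m + 1 := by omega
    have h2 : 2 * (m + 1) = 2 * m + 1 + 1 := by ring
    rw [h3, h2, Nat.factorial_succ, Nat.factorial_succ, Nat.factorial_succ, ← ih]
    ring

lemma sc_key2 (n : ℕ) :
    catalan n * ((n + 1).factorial * n.factorial) = (2 * n).factorial := by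
  have h := succ_mul_catalan_eq_centralBinom n
  have h2 : (2 * n).choose n * n.factorial * n.factorial = (2 * n).factorial := by
    have h3 := Nat.choose_mul_factorial_mul_factorial (show n ≤ 2 * n by omega)
    have h4 : 2 * n - n = n := by omega
    rw [h4] at h3
    exact h3
  calc catalan n * ((n + 1).factorial * n.factorial)
      = ((n + 1) * catalan n) * n.factorial * n.factorial := by
        rw [Nat.factorial_succ]; ring
    _ = (2 * n).choose n * n.factorial * n.factorial := by
        rw [h]; rfl
    _ = (2 * n).factorial := h2

lemma sc_key3 (n : ℕ) :
    2 ^ n * ∏ k ∈ Icc 1 n, (2 * k - 1) = catalan n * (n + 1).factorial := by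
  apply Nat.eq_of_mul_eq_mul_right n.factorial_pos
  rw [sc_key1, mul_assoc, sc_key2]

lemma sc_main (m : ℕ) :
    2 ^ ((m + 1).choose 2) * ∏ k ∈ Icc 1 m, (2 * k - 1) ^ (m + 1 - k) =
      (∏ i ∈ Icc 1 m, catalan i) * ∏ i ∈ Icc 1 (m + 1), i.factorial := by
  induction m with
  | zero => simp
  | succ m ih =>
    have hch : (m + 2).choose 2 = (m + 1).choose 2 + (m + 1) := by
      rw [Nat.choose_succ_succ (m + 1) 1, Nat.choose_one_right, Nat.add_comm]
    have hp : ∀ k ∈ Icc 1 (m + 1),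
        (2 * k - 1) ^ (m + 1 + 1 - k) = (2 * k - 1) ^ (m + 1 - k) * (2 * k - 1) := by
      intro k hk
      rw [← pow_succ]
      congr 1
      simp only [mem_Icc] at hk
      omega
    have e1 : ∏ k ∈ Icc 1 (m + 1), (2 * k - 1) ^ (m + 1 - k)
        = ∏ k ∈ Icc 1 m, (2 * k - 1) ^ (m + 1 - k) := by
      rw [Finset.prod_Icc_succ_top (by omega)]
      simp
    have e2 : ∏ i ∈ Icc 1 (m + 1 + 1), i.factorial
        = (∏ i ∈ Icc 1 (m + 1), i.factorial) * (m + 1 + 1).factorial :=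
      Finset.prod_Icc_succ_top (by omega) _
    have e3 : ∏ i ∈ Icc 1 (m + 1), catalan i
        = (∏ i ∈ Icc 1 m, catalan i) * catalan (m + 1) :=
      Finset.prod_Icc_succ_top (by omega) _
    rw [Finset.prod_congr rfl hp, Finset.prod_mul_distrib, e1, e2, e3,
      show m + 1 + 1 = m + 2 from rfl, hch, pow_add]
    calc 2 ^ ((m + 1).choose 2) * 2 ^ (m + 1) *
          ((∏ k ∈ Icc 1 m, (2 * k - 1) ^ (m + 1 - k)) * ∏ k ∈ Icc 1 (m + 1), (2 * k - 1))
        = (2 ^ ((m + 1).choose 2) * ∏ k ∈ Icc 1 m, (2 * k - 1) ^ (m + 1 - k)) *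
          (2 ^ (m + 1) * ∏ k ∈ Icc 1 (m + 1), (2 * k - 1)) := by ring
      _ = ((∏ i ∈ Icc 1 m, catalan i) * ∏ i ∈ Icc 1 (m + 1), i.factorial) *
          (catalan (m + 1) * (m + 1 + 1).factorial) := by rw [ih, sc_key3]
      _ = (∏ i ∈ Icc 1 m, catalan i) * catalan (m + 1) *
          ((∏ i ∈ Icc 1 (m + 1), i.factorial) * (m + 2).factorial) := by ring

/-- For every `n ≥ 1`,
`C(n,2)! · 2^{C(n,2)} / ∏_{i=1}^n i! = f^{(n-1,…,1)} · ∏_{i=1}^{n-1} Cat(i)`,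
where `f^{(n-1,…,1)} = C(n,2)! / ∏_{k=1}^{n-1} (2k-1)^{n-k}` is the number of
standard Young tableaux of staircase shape and `Cat(i) = C(2i,i)/(i+1)` is the
`i`-th Catalan number. -/
theorem staircase_catalan_identity (n : ℕ) (hn : 1 ≤ n) :
    (((n.choose 2).factorial : ℚ) * 2 ^ n.choose 2) /
        (∏ i ∈ Finset.Icc 1 n, (i.factorial : ℚ)) =
      (((n.choose 2).factorial : ℚ) /
          ∏ k ∈ Finset.Icc 1 (n - 1), ((2 * k - 1 : ℕ) : ℚ) ^ (n - k)) *
        ∏ i ∈ Finset.Icc 1 (n - 1), ((1 / ((i : ℚ) + 1)) * (((2 * i).choose i : ℕ) : ℚ)) := by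
  obtain ⟨m, rfl⟩ : ∃ m, n = m + 1 := ⟨n - 1, by omega⟩
  simp only [Nat.add_sub_cancel]
  have hcat : ∀ i ∈ Icc 1 m,
      (1 / ((i : ℚ) + 1)) * (((2 * i).choose i : ℕ) : ℚ) = (catalan i : ℚ) := by
    intro i _
    have h := succ_mul_catalan_eq_centralBinom i
    have h2 : ((2 * i).choose i : ℚ) = ((i : ℚ) + 1) * (catalan i : ℚ) := by
      have : (2 * i).choose i = (i + 1) * catalan i := by rw [h]; rfl
      rw [this]; push_cast; ring
    rw [h2]
    have : ((i : ℚ) + 1) ≠ 0 := by positivity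
    field_simp
  rw [Finset.prod_congr rfl hcat]
  have hA : (∏ i ∈ Icc 1 (m + 1), (i.factorial : ℚ)) ≠ 0 := by
    apply Finset.prod_ne_zero_iff.mpr
    intro i _
    exact_mod_cast (Nat.factorial_pos i).ne'
  have hD : (∏ k ∈ Icc 1 m, ((2 * k - 1 : ℕ) : ℚ) ^ (m + 1 - k)) ≠ 0 := by
    apply Finset.prod_ne_zero_iff.mpr
    intro k hk
    simp only [mem_Icc] at hk
    have : (2 * k - 1 : ℕ) ≠ 0 := by omega
    positivity
  rw [div_mul_eq_mul_div, div_eq_div_iff hA hD]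
  have key : ((2 : ℚ) ^ ((m + 1).choose 2) * ∏ k ∈ Icc 1 m, ((2 * k - 1 : ℕ) : ℚ) ^ (m + 1 - k)) =
      (∏ i ∈ Icc 1 m, (catalan i : ℚ)) * ∏ i ∈ Icc 1 (m + 1), (i.factorial : ℚ) := by
    exact_mod_cast sc_main m
  calc (((m + 1).choose 2).factorial : ℚ) * 2 ^ ((m + 1).choose 2) *
        ∏ k ∈ Icc 1 m, ((2 * k - 1 : ℕ) : ℚ) ^ (m + 1 - k)
      = (((m + 1).choose 2).factorial : ℚ) *
        ((2 : ℚ) ^ ((m + 1).choose 2) * ∏ k ∈ Icc 1 m, ((2 * k - 1 : ℕ) : ℚ) ^ (m + 1 - k)) := by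
        ring
    _ = (((m + 1).choose 2).factorial : ℚ) *
        ((∏ i ∈ Icc 1 m, (catalan i : ℚ)) * ∏ i ∈ Icc 1 (m + 1), (i.factorial : ℚ)) := by
        rw [key]
    _ = (((m + 1).choose 2).factorial : ℚ) * (∏ i ∈ Icc 1 m, (catalan i : ℚ)) *
        ∏ i ∈ Icc 1 (m + 1), (i.factorial : ℚ) := by ring
end

section
/- Let n ≥ 2 and let a = (a_1,…,a_n) be a vector of nonnegative integers. Then T_n(a_1,…,a_n) = Σ_B ∏_{i=1}^{n−1} (1 + b_{i,i}), where the sum is over all (n−1)×(n−1) Tesler matrices B = (b_{i,j}) with hook sums (a_1,…,a_{n−1}). -/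
open Finset

/-- A Tesler matrix with hook sums `a`: an `n × n` upper triangular matrix with
nonnegative integer entries whose `k`-th hook sum equals `a k`. -/
def IsTeslerMatrix (n : ℕ) (a : Fin n → ℕ) (b : Fin n → Fin n → ℕ) : Prop :=
  (∀ i j : Fin n, j < i → b i j = 0) ∧
  (∀ k : Fin n,
    (∑ j ∈ univ.filter (fun j => k ≤ j), (b k j : ℤ))
      - (∑ i ∈ univ.filter (fun i => i < k), (b i k : ℤ)) = (a k : ℤ))

namespace TeslerAux

lemma hook_nat {n : ℕ} {a : Fin n → ℕ} {b : Fin n → Fin n → ℕ}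
    (hb : IsTeslerMatrix n a b) (k : Fin n) :
    ∑ j ∈ univ.filter (fun j => k ≤ j), b k j
      = a k + ∑ i ∈ univ.filter (fun i => i < k), b i k := by
  have h := hb.2 k
  have h2 : ((∑ j ∈ univ.filter (fun j => k ≤ j), b k j : ℕ) : ℤ)
      = ((a k + ∑ i ∈ univ.filter (fun i => i < k), b i k : ℕ) : ℤ) := by
    push_cast
    linarith
  exact_mod_cast h2

lemma rowSum_bound_aux {n : ℕ} {a : Fin n → ℕ} {b : Fin n → Fin n → ℕ}
    (hb : IsTeslerMatrix n a b) (s : ℕ) :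
    ∀ k : Fin n, (k : ℕ) ≤ s →
      ∑ j ∈ univ.filter (fun j => k ≤ j), b k j ≤ (∑ i, a i) * (n + 1) ^ s := by
  set A := ∑ i, a i with hA
  induction s with
  | zero =>
    intro k hk
    rw [hook_nat hb]
    have hak : a k ≤ A := Finset.single_le_sum (fun i _ => Nat.zero_le _) (mem_univ k)
    have : univ.filter (fun i => i < k) = ∅ := by
      ext i
      simp only [mem_filter, mem_univ, true_and, Finset.notMem_empty, iff_false]
      intro hi
      have := Fin.lt_iff_val_lt_val.mp hi
      omega
    rw [this]
    simpa using hak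
  | succ s ih =>
    intro k hk
    rw [hook_nat hb]
    have hak : a k ≤ A := Finset.single_le_sum (fun i _ => Nat.zero_le _) (mem_univ k)
    have hterm : ∀ i ∈ univ.filter (fun i => i < k), b i k ≤ A * (n + 1) ^ s := by
      intro i hi
      simp only [mem_filter] at hi
      have hik : i < k := hi.2
      have h1 : b i k ≤ ∑ j ∈ univ.filter (fun j => i ≤ j), b i j := by
        apply Finset.single_le_sum (fun j _ => Nat.zero_le _)
        simp [le_of_lt hik]
      have h2 := ih i (by have := Fin.lt_iff_val_lt_val.mp hik; omega)
      exact h1.trans h2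
    have hsum : ∑ i ∈ univ.filter (fun i => i < k), b i k
        ≤ (univ.filter (fun i => i < k)).card * (A * (n + 1) ^ s) :=
      Finset.sum_le_card_nsmul _ _ _ hterm
    have hcard : (univ.filter (fun i => i < k)).card ≤ n := by
      calc (univ.filter (fun i => i < k)).card ≤ univ.card := Finset.card_filter_le _ _
        _ = n := by simp
    have hA1 : A ≤ A * (n + 1) ^ s :=
      Nat.le_mul_of_pos_right _ (Nat.pow_pos (by omega))
    calc a k + ∑ i ∈ univ.filter (fun i => i < k), b i k
        ≤ A * (n+1)^s + n * (A * (n + 1) ^ s) := by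
          have := hsum.trans (Nat.mul_le_mul_right _ hcard)
          omega
      _ = A * ((n + 1) ^ s * (n + 1)) := by ring
      _ = A * (n + 1) ^ (s+1) := by rw [pow_succ]

lemma rowSum_bound {n : ℕ} {a : Fin n → ℕ} {b : Fin n → Fin n → ℕ}
    (hb : IsTeslerMatrix n a b) (k : Fin n) :
    ∑ j ∈ univ.filter (fun j => k ≤ j), b k j ≤ (∑ i, a i) * (n + 1) ^ n :=
  rowSum_bound_aux hb n k (le_of_lt k.isLt)

lemma tesler_finite (n : ℕ) (a : Fin n → ℕ) :
    Finite {b : Fin n → Fin n → ℕ // IsTeslerMatrix n a b} := by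
  set N := (∑ i, a i) * (n + 1) ^ n with hN
  have hbd : ∀ (b : Fin n → Fin n → ℕ), IsTeslerMatrix n a b → ∀ i j, b i j ≤ N := by
    intro b hb i j
    rcases lt_or_ge j i with h | h
    · rw [hb.1 i j h]; exact Nat.zero_le _
    · have h1 : b i j ≤ ∑ l ∈ univ.filter (fun l => i ≤ l), b i l := by
        apply Finset.single_le_sum (fun l _ => Nat.zero_le _)
        simp [h]
      exact h1.trans (rowSum_bound hb i)
  apply Finite.of_injective (fun b => (fun i j => (⟨b.1 i j, Nat.lt_succ_of_le (hbd b.1 b.2 i j)⟩ : Fin (N+1)) : Fin n → Fin n → Fin (N+1)))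
  intro b1 b2 h
  ext i j
  exact congrArg Fin.val (congrFun (congrFun h i) j)


variable {m : ℕ}

/-- The matrix built from an `m × m` Tesler matrix `B` and a splitting `c`. -/
def fromB (a : Fin (m+1) → ℕ) (B : Fin m → Fin m → ℕ) (c : Fin m → ℕ) :
    Fin (m+1) → Fin (m+1) → ℕ := fun i j =>
  if hi : i = Fin.last m then
    (if j = Fin.last m then a (Fin.last m) + ∑ l, (B l l - c l) else 0)
  else
    (if hj : j = Fin.last m then B (i.castPred hi) (i.castPred hi) - c (i.castPred hi)
     else if i.castPred hi = j.castPred hj then c (i.castPred hi)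
     else B (i.castPred hi) (j.castPred hj))

def toB (b : Fin (m+1) → Fin (m+1) → ℕ) : Fin m → Fin m → ℕ := fun i j =>
  if i = j then b i.castSucc i.castSucc + b i.castSucc (Fin.last m)
  else b i.castSucc j.castSucc

lemma fromB_cc (a : Fin (m+1) → ℕ) (B : Fin m → Fin m → ℕ) (c : Fin m → ℕ) (i j : Fin m) :
    fromB a B c i.castSucc j.castSucc = if i = j then c i else B i j := by
  simp [fromB, (Fin.castSucc_lt_last _).ne, Fin.castPred_castSucc]
  by_cases h : i = j <;> simp [h]

lemma fromB_cl (a : Fin (m+1) → ℕ) (B : Fin m → Fin m → ℕ) (c : Fin m → ℕ) (i : Fin m) :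
    fromB a B c i.castSucc (Fin.last m) = B i i - c i := by
  simp [fromB, (Fin.castSucc_lt_last _).ne, Fin.castPred_castSucc]

lemma fromB_lc (a : Fin (m+1) → ℕ) (B : Fin m → Fin m → ℕ) (c : Fin m → ℕ) (j : Fin m) :
    fromB a B c (Fin.last m) j.castSucc = 0 := by
  simp [fromB, (Fin.castSucc_lt_last _).ne]

lemma fromB_ll (a : Fin (m+1) → ℕ) (B : Fin m → Fin m → ℕ) (c : Fin m → ℕ) :
    fromB a B c (Fin.last m) (Fin.last m) = a (Fin.last m) + ∑ l, (B l l - c l) := by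
  simp [fromB]


section sums
variable {M : Type*} [AddCommMonoid M]

lemma sumA (k : Fin m) (f : Fin (m+1) → M) :
    ∑ j ∈ univ.filter (fun j => k.castSucc ≤ j), f j
      = (∑ j ∈ univ.filter (fun j => k ≤ j), f j.castSucc) + f (Fin.last m) := by
  rw [Finset.sum_filter, Finset.sum_filter, Fin.sum_univ_castSucc]
  simp [Fin.castSucc_le_castSucc_iff, Fin.le_last]

lemma sumB (k : Fin m) (f : Fin (m+1) → M) :
    ∑ i ∈ univ.filter (fun i => i < k.castSucc), f i
      = ∑ i ∈ univ.filter (fun i => i < k), f i.castSucc := by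
  rw [Finset.sum_filter, Finset.sum_filter, Fin.sum_univ_castSucc]
  simp [Fin.castSucc_lt_castSucc_iff, Fin.not_lt.mpr (Fin.le_last k.castSucc)]

lemma sumC (f : Fin (m+1) → M) :
    ∑ j ∈ univ.filter (fun j => Fin.last m ≤ j), f j = f (Fin.last m) := by
  rw [Finset.sum_filter, Fin.sum_univ_castSucc]
  simp [Fin.last_le_iff, Fin.ne_of_lt (Fin.castSucc_lt_last _)]

lemma sumD (f : Fin (m+1) → M) :
    ∑ i ∈ univ.filter (fun i => i < Fin.last m), f i = ∑ i : Fin m, f i.castSucc := by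
  rw [Finset.sum_filter, Fin.sum_univ_castSucc]
  simp [Fin.castSucc_lt_last]

end sums

theorem fromB_isTesler {a : Fin (m+1) → ℕ} {B : Fin m → Fin m → ℕ} {c : Fin m → ℕ}
    (hB : IsTeslerMatrix m (fun i => a i.castSucc) B) (hc : ∀ i, c i ≤ B i i) :
    IsTeslerMatrix (m+1) a (fromB a B c) := by
  constructor
  · intro i j hji
    rcases eq_or_ne j (Fin.last m) with rfl | hj
    · exact absurd hji (Fin.not_lt.mpr (Fin.le_last i))
    · rw [← Fin.castSucc_castPred j hj]
      rcases eq_or_ne i (Fin.last m) with rfl | hi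
      · rw [fromB_lc]
      · rw [← Fin.castSucc_castPred i hi, fromB_cc]
        have hlt : j.castPred hj < i.castPred hi := by
          rwa [← Fin.castSucc_lt_castSucc_iff, Fin.castSucc_castPred, Fin.castSucc_castPred]
        rw [if_neg (Fin.ne_of_gt hlt)]
        exact hB.1 _ _ hlt
  · intro k
    rcases eq_or_ne k (Fin.last m) with rfl | hk
    · rw [sumC (fun j => (fromB a B c (Fin.last m) j : ℤ)),
        sumD (fun i => (fromB a B c i (Fin.last m) : ℤ))]
      simp only [fromB_ll, fromB_cl]
      push_cast
      ring
    · rw [← Fin.castSucc_castPred k hk]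
      set k' := k.castPred hk with hk'
      rw [sumA k' (fun j => (fromB a B c k'.castSucc j : ℤ)),
        sumB k' (fun i => (fromB a B c i k'.castSucc : ℤ))]
      simp only [fromB_cc, fromB_cl]
      have hdiff : ∑ j ∈ univ.filter (fun j => k' ≤ j),
          ((B k' j : ℤ) - ((if k' = j then c k' else B k' j : ℕ) : ℤ))
          = (B k' k' : ℤ) - (c k' : ℤ) := by
        rw [Finset.sum_eq_single k']
        · simp
        · intro j hj hne
          rw [if_neg (fun h => hne h.symm)]
          ring
        · intro h
          exact absurd (by simp : k' ∈ univ.filter (fun j => k' ≤ j)) h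
      rw [Finset.sum_sub_distrib] at hdiff
      have hcol : ∑ i ∈ univ.filter (fun i => i < k'),
          ((if i = k' then c i else B i k' : ℕ) : ℤ)
          = ∑ i ∈ univ.filter (fun i => i < k'), (B i k' : ℤ) := by
        apply Finset.sum_congr rfl
        intro i hi
        simp only [mem_filter] at hi
        rw [if_neg (Fin.ne_of_lt hi.2)]
      have hs := hB.2 k'
      rw [hcol, Nat.cast_sub (hc k')]
      have : (a k'.castSucc : ℤ) = ((fun i => a i.castSucc) k' : ℤ) := rfl
      rw [this]
      linarith [hs]

theorem toB_isTesler {a : Fin (m+1) → ℕ} {b : Fin (m+1) → Fin (m+1) → ℕ}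
    (hb : IsTeslerMatrix (m+1) a b) :
    IsTeslerMatrix m (fun i => a i.castSucc) (toB b) := by
  constructor
  · intro i j hji
    rw [toB, if_neg (Fin.ne_of_gt hji)]
    exact hb.1 _ _ (Fin.castSucc_lt_castSucc_iff.mpr hji)
  · intro k
    have hs := hb.2 k.castSucc
    rw [sumA k (fun j => (b k.castSucc j : ℤ)),
      sumB k (fun i => (b i k.castSucc : ℤ))] at hs
    have hdiff : ∑ j ∈ univ.filter (fun j => k ≤ j),
        ((toB b k j : ℤ) - (b k.castSucc j.castSucc : ℤ))
        = (b k.castSucc (Fin.last m) : ℤ) := by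
      rw [Finset.sum_eq_single k]
      · simp [toB]
      · intro j hj hne
        rw [toB, if_neg (fun h => hne h.symm)]
        ring
      · intro h
        exact absurd (by simp : k ∈ univ.filter (fun j => k ≤ j)) h
    rw [Finset.sum_sub_distrib] at hdiff
    have hcol : ∑ i ∈ univ.filter (fun i => i < k), (toB b i k : ℤ)
        = ∑ i ∈ univ.filter (fun i => i < k), (b i.castSucc k.castSucc : ℤ) := by
      apply Finset.sum_congr rfl
      intro i hi
      simp only [mem_filter] at hi
      rw [toB, if_neg (Fin.ne_of_lt hi.2)]
    rw [hcol]
    linarith [hs]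

def E (a : Fin (m+1) → ℕ) :
    (Σ B : {B : Fin m → Fin m → ℕ // IsTeslerMatrix m (fun i => a i.castSucc) B},
      {c : Fin m → ℕ // ∀ i, c i ≤ B.1 i i}) ≃
    {b : Fin (m+1) → Fin (m+1) → ℕ // IsTeslerMatrix (m+1) a b} where
  toFun p := ⟨fromB a p.1.1 p.2.1, fromB_isTesler p.1.2 p.2.2⟩
  invFun b := ⟨⟨toB b.1, toB_isTesler b.2⟩,
    ⟨fun i => b.1 i.castSucc i.castSucc, fun i => by simp [toB]⟩⟩
  left_inv := by
    rintro ⟨⟨B, hB⟩, ⟨c, hc⟩⟩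
    have h1 : toB (fromB a B c) = B := by
      funext i j
      by_cases hij : i = j
      · subst hij
        simp [toB, fromB_cc, fromB_cl]
        exact Nat.add_sub_cancel' (hc i)
      · simp [toB, hij, fromB_cc]
    have h2 : (fun i => fromB a B c i.castSucc i.castSucc) = c := by
      funext i
      simp [fromB_cc]
    refine Sigma.ext (Subtype.ext h1) ?_
    refine (Subtype.heq_iff_coe_eq ?_).mpr h2
    intro x
    simp only [h1]
  right_inv := by
    rintro ⟨bb, hbb⟩
    apply Subtype.ext
    funext i j
    show fromB a (toB bb) (fun l => bb l.castSucc l.castSucc) i j = bb i j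
    rcases eq_or_ne i (Fin.last m) with rfl | hi
    · rcases eq_or_ne j (Fin.last m) with rfl | hj
      · rw [fromB_ll]
        have hterm : ∀ l : Fin m,
            toB bb l l - bb l.castSucc l.castSucc = bb l.castSucc (Fin.last m) := by
          intro l
          simp only [toB, if_pos rfl]
          exact Nat.add_sub_cancel_left _ _
        have hs := hbb.2 (Fin.last m)
        rw [sumC (fun j => (bb (Fin.last m) j : ℤ)),
          sumD (fun i => (bb i (Fin.last m) : ℤ))] at hs
        have hnat : bb (Fin.last m) (Fin.last m)
            = a (Fin.last m) + ∑ l : Fin m, bb l.castSucc (Fin.last m) := by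
          have : ((bb (Fin.last m) (Fin.last m) : ℕ) : ℤ)
              = ((a (Fin.last m) + ∑ l : Fin m, bb l.castSucc (Fin.last m) : ℕ) : ℤ) := by
            push_cast
            linarith [hs]
          exact_mod_cast this
        rw [hnat]
        congr 1
        exact Finset.sum_congr rfl (fun l _ => hterm l)
      · rw [← Fin.castSucc_castPred j hj, fromB_lc]
        exact (hbb.1 _ _ (Fin.castSucc_lt_last _)).symm
    · rcases eq_or_ne j (Fin.last m) with rfl | hj
      · rw [← Fin.castSucc_castPred i hi, fromB_cl]
        simp only [toB, if_pos rfl]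
        exact Nat.add_sub_cancel_left _ _
      · rw [← Fin.castSucc_castPred i hi, ← Fin.castSucc_castPred j hj, fromB_cc]
        by_cases hij : i.castPred hi = j.castPred hj
        · rw [if_pos hij, hij]
        · rw [if_neg hij]
          simp only [toB, if_neg hij]

def fiberEquiv (k : Fin m → ℕ) :
    {c : Fin m → ℕ // ∀ i, c i ≤ k i} ≃ (∀ i, Fin (k i + 1)) where
  toFun c i := ⟨c.1 i, Nat.lt_succ_of_le (c.2 i)⟩
  invFun d := ⟨fun i => d i, fun i => Nat.lt_succ_iff.mp (d i).isLt⟩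
  left_inv _ := rfl
  right_inv _ := rfl

lemma card_fiber (k : Fin m → ℕ) :
    Nat.card {c : Fin m → ℕ // ∀ i, c i ≤ k i} = ∏ i, (1 + k i) := by
  rw [Nat.card_congr (fiberEquiv k), Nat.card_pi]
  exact Finset.prod_congr rfl (fun i _ => by simp [Nat.add_comm])

lemma card_tsum (X : Type*) [Finite X] :
    (Nat.card X : ENNReal) = ∑' _ : X, (1 : ENNReal) := by
  haveI := Fintype.ofFinite X
  rw [tsum_fintype]
  simp [Nat.card_eq_fintype_card]

theorem aux (m : ℕ) (a : Fin (m+1) → ℕ) :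
    (Nat.card {b : Fin (m+1) → Fin (m+1) → ℕ // IsTeslerMatrix (m+1) a b} : ENNReal) =
      ∑' B : {B : Fin m → Fin m → ℕ // IsTeslerMatrix m (fun i => a i.castSucc) B},
        ∏ i : Fin m, ((1 + B.val i i : ℕ) : ENNReal) := by
  haveI h1 := tesler_finite (m+1) a
  haveI h2 := tesler_finite m (fun i => a i.castSucc)
  haveI h3 : ∀ B : {B : Fin m → Fin m → ℕ // IsTeslerMatrix m (fun i => a i.castSucc) B},
      Finite {c : Fin m → ℕ // ∀ i, c i ≤ B.1 i i} :=
    fun B => Finite.of_equiv _ (fiberEquiv _).symm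
  calc (Nat.card {b : Fin (m+1) → Fin (m+1) → ℕ // IsTeslerMatrix (m+1) a b} : ENNReal)
      = ∑' _ : {b : Fin (m+1) → Fin (m+1) → ℕ // IsTeslerMatrix (m+1) a b}, (1:ENNReal) :=
        card_tsum _
    _ = ∑' _ : (Σ B : {B : Fin m → Fin m → ℕ // IsTeslerMatrix m (fun i => a i.castSucc) B},
          {c : Fin m → ℕ // ∀ i, c i ≤ B.1 i i}), (1:ENNReal) :=
        ((E a).tsum_eq (fun _ => (1:ENNReal))).symm
    _ = ∑' B : {B : Fin m → Fin m → ℕ // IsTeslerMatrix m (fun i => a i.castSucc) B},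
          ∑' _ : {c : Fin m → ℕ // ∀ i, c i ≤ B.1 i i}, (1:ENNReal) :=
        ENNReal.tsum_sigma' (fun _ => (1:ENNReal))
    _ = ∑' B : {B : Fin m → Fin m → ℕ // IsTeslerMatrix m (fun i => a i.castSucc) B},
          (Nat.card {c : Fin m → ℕ // ∀ i, c i ≤ B.1 i i} : ENNReal) :=
        tsum_congr (fun B => (card_tsum _).symm)
    _ = ∑' B : {B : Fin m → Fin m → ℕ // IsTeslerMatrix m (fun i => a i.castSucc) B},
          ∏ i : Fin m, ((1 + B.val i i : ℕ) : ENNReal) :=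
        tsum_congr (fun B => by rw [card_fiber, Nat.cast_prod])

end TeslerAux

/-- The recursion `T_n(a_1,…,a_n) = ∑_B ∏_{i=1}^{n-1} (1 + b_{i,i})`, where the sum is
over all `(n-1) × (n-1)` Tesler matrices `B` with hook sums `(a_1,…,a_{n-1})`.
(The equality is stated in `ℝ≥0∞` so that the possibly infinite sum is defined;
both sides are in fact finite.) -/
theorem teslerMatrix_count_recursion (n : ℕ) (hn : 2 ≤ n) (a : Fin n → ℕ) :
    (Nat.card {b : Fin n → Fin n → ℕ // IsTeslerMatrix n a b} : ENNReal) =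
      ∑' B : {B : Fin (n - 1) → Fin (n - 1) → ℕ //
          IsTeslerMatrix (n - 1) (fun i => a (Fin.castLE (Nat.sub_le n 1) i)) B},
        ∏ i : Fin (n - 1), ((1 + B.val i i : ℕ) : ENNReal) := by
  obtain ⟨m, rfl⟩ : ∃ m, n = m + 1 := ⟨n - 1, by omega⟩
  exact TeslerAux.aux m a
end

section
/- For every n ≥ 1, the rational number identity (n(n−1))! / ( n! · (∏_{i=1}^{n−1} i!)^2 ) = f^{(n−1)^n} · ∏_{i=1}^{n−1} ( ((i+1)/2) · Cat(i)^2 ) holds, where f^{(n−1)^n} = (n(n−1))! · ∏_{k=0}^{n−1} k! / ∏_{k=0}^{n−1} (n+k−1)! is the number of standard Young tableaux of rectangular shape (n−1)^n and Cat(i) = (1/(i+1))·C(2i,i) is the i-th Catalan number. -/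
open Finset

lemma aux_range_eq_Icc (m : ℕ) :
    ∏ k ∈ Finset.range (m + 1), ((k.factorial : ℚ)) =
      ∏ i ∈ Finset.Icc 1 m, (i.factorial : ℚ) := by
  induction m with
  | zero => simp
  | succ m ih =>
      rw [Finset.prod_range_succ, ih, Finset.prod_Icc_succ_top (by omega)]

lemma aux_prod_succ (m : ℕ) :
    ∏ i ∈ Finset.Icc 1 m, ((i : ℚ) + 1) = ((m + 1).factorial : ℚ) := by
  induction m with
  | zero => simp
  | succ m ih =>
      rw [Finset.prod_Icc_succ_top (by omega), ih]
      have h : ((m + 1 + 1).factorial : ℚ) = ((m : ℚ) + 2) * ((m + 1).factorial : ℚ) := by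
        rw [Nat.factorial_succ]; push_cast; ring
      rw [h]; push_cast; ring

lemma aux_shift (m : ℕ) :
    (m.factorial : ℚ) * ∏ k ∈ Finset.range (m + 2), (((m + 1) + k).factorial : ℚ) =
      (∏ k ∈ Finset.range (m + 1), ((m + k).factorial : ℚ)) *
        ((2 * m + 1).factorial : ℚ) * ((2 * m + 2).factorial : ℚ) := by
  have h : ∏ k ∈ Finset.range (m + 3), ((m + k).factorial : ℚ) =
      (∏ k ∈ Finset.range (m + 2), ((m + (k + 1)).factorial : ℚ)) * ((m + 0).factorial : ℚ) :=
    Finset.prod_range_succ' _ _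
  have e1 : m + (m + 1) = 2 * m + 1 := by omega
  have e2 : m + (m + 2) = 2 * m + 2 := by omega
  have h2 : ∏ k ∈ Finset.range (m + 3), ((m + k).factorial : ℚ) =
      (∏ k ∈ Finset.range (m + 1), ((m + k).factorial : ℚ)) *
        ((2 * m + 1).factorial : ℚ) * ((2 * m + 2).factorial : ℚ) := by
    rw [Finset.prod_range_succ, Finset.prod_range_succ, e1, e2]
  have h3 : ∏ k ∈ Finset.range (m + 2), (((m + 1) + k).factorial : ℚ) =
      ∏ k ∈ Finset.range (m + 2), ((m + (k + 1)).factorial : ℚ) := by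
    apply Finset.prod_congr rfl
    intro k _
    have : m + 1 + k = m + (k + 1) := by omega
    rw [this]
  have h4 : (∏ k ∈ Finset.range (m + 2), ((m + (k + 1)).factorial : ℚ)) * (m.factorial : ℚ) =
      (∏ k ∈ Finset.range (m + 1), ((m + k).factorial : ℚ)) *
        ((2 * m + 1).factorial : ℚ) * ((2 * m + 2).factorial : ℚ) := by
    simpa using h.symm.trans h2
  rw [h3, mul_comm]
  exact h4

lemma keyK (m : ℕ) :
    2 ^ m * (∏ i ∈ Finset.Icc 1 m, (i.factorial : ℚ)) *
        (∏ k ∈ Finset.range (m + 1), ((m + k).factorial : ℚ)) =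
      ∏ i ∈ Finset.Icc 1 m, (((2 * i).factorial : ℚ)) ^ 2 := by
  induction m with
  | zero => simp
  | succ m ih =>
      have hm : (m.factorial : ℚ) ≠ 0 := Nat.cast_ne_zero.mpr m.factorial_ne_zero
      have hshift := aux_shift m
      rw [Finset.prod_Icc_succ_top (show 1 ≤ m + 1 by omega),
          Finset.prod_Icc_succ_top (show 1 ≤ m + 1 by omega)]
      have e : 2 * (m + 1) = 2 * m + 2 := by omega
      rw [e]
      have h2 : ((2 * m + 2).factorial : ℚ) = 2 * ((m : ℚ) + 1) * ((2 * m + 1).factorial : ℚ) := by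
        rw [show 2 * m + 2 = (2 * m + 1) + 1 from by omega, Nat.factorial_succ]
        push_cast; ring
      have hfac : (((m : ℕ) + 1).factorial : ℚ) = ((m : ℚ) + 1) * (m.factorial : ℚ) := by
        rw [Nat.factorial_succ]; push_cast; ring
      apply mul_left_cancel₀ hm
      calc (m.factorial : ℚ) * (2 ^ (m + 1) *
            ((∏ i ∈ Finset.Icc 1 m, (i.factorial : ℚ)) * ((m + 1).factorial : ℚ)) *
            ∏ k ∈ Finset.range (m + 1 + 1), ((m + 1 + k).factorial : ℚ))
          = 2 ^ (m + 1) * ((∏ i ∈ Finset.Icc 1 m, (i.factorial : ℚ)) * ((m + 1).factorial : ℚ)) *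
            ((m.factorial : ℚ) * ∏ k ∈ Finset.range (m + 2), ((m + 1 + k).factorial : ℚ)) := by
            ring
        _ = 2 ^ (m + 1) * ((∏ i ∈ Finset.Icc 1 m, (i.factorial : ℚ)) * ((m + 1).factorial : ℚ)) *
            ((∏ k ∈ Finset.range (m + 1), ((m + k).factorial : ℚ)) *
              ((2 * m + 1).factorial : ℚ) * ((2 * m + 2).factorial : ℚ)) := by rw [hshift]
        _ = (m.factorial : ℚ) *
            ((∏ i ∈ Finset.Icc 1 m, (((2 * i).factorial : ℚ)) ^ 2) *
              (((2 * m + 2).factorial : ℚ)) ^ 2) := by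
            rw [← ih, h2, hfac]
            ring

/-- For every `n ≥ 1`,
`(n(n-1))! / (n! · (∏_{i=1}^{n-1} i!)²) = f^{(n-1)^n} · ∏_{i=1}^{n-1} ((i+1)/2 · Cat(i)²)`,
where `f^{(n-1)^n} = (n(n-1))! · ∏_{k=0}^{n-1} k! / ∏_{k=0}^{n-1} (n+k-1)!` is the
number of standard Young tableaux of rectangular shape `(n-1)^n` and
`Cat(i) = C(2i,i)/(i+1)` is the `i`-th Catalan number. -/
theorem rectangular_catalan_identity (n : ℕ) (hn : 1 ≤ n) :
    ((n * (n - 1)).factorial : ℚ) /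
        ((n.factorial : ℚ) * (∏ i ∈ Finset.Icc 1 (n - 1), (i.factorial : ℚ)) ^ 2) =
      (((n * (n - 1)).factorial : ℚ) * (∏ k ∈ Finset.range n, (k.factorial : ℚ)) /
          ∏ k ∈ Finset.range n, ((n + k - 1).factorial : ℚ)) *
        ∏ i ∈ Finset.Icc 1 (n - 1),
          ((((i : ℚ) + 1) / 2) * ((1 / ((i : ℚ) + 1)) * (((2 * i).choose i : ℕ) : ℚ)) ^ 2) := by
  obtain ⟨m, rfl⟩ : ∃ m, n = m + 1 := ⟨n - 1, (Nat.succ_pred_eq_of_pos hn).symm⟩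
  have hsub : m + 1 - 1 = m := rfl
  rw [hsub]
  have hB : ∏ k ∈ Finset.range (m + 1), (((m + 1) + k - 1).factorial : ℚ) =
      ∏ k ∈ Finset.range (m + 1), ((m + k).factorial : ℚ) := by
    apply Finset.prod_congr rfl
    intro k _
    congr 2
    omega
  rw [hB, aux_range_eq_Icc]
  -- rewrite the Catalan product
  have hT : ∏ i ∈ Finset.Icc 1 m,
      ((((i : ℚ) + 1) / 2) * ((1 / ((i : ℚ) + 1)) * (((2 * i).choose i : ℕ) : ℚ)) ^ 2) =
      ∏ i ∈ Finset.Icc 1 m,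
        (((2 * i).factorial : ℚ) ^ 2 / (2 * ((i : ℚ) + 1) * ((i.factorial : ℚ)) ^ 4)) := by
    apply Finset.prod_congr rfl
    intro i hi
    have hile : i ≤ 2 * i := by omega
    have hch : (((2 * i).choose i : ℕ) : ℚ) =
        ((2 * i).factorial : ℚ) / ((i.factorial : ℚ) * ((2 * i - i).factorial : ℚ)) :=
      Nat.cast_choose ℚ hile
    have hsub2 : 2 * i - i = i := by omega
    rw [hch, hsub2]
    have h1 : ((i : ℚ) + 1) ≠ 0 := by positivity
    have h2 : (i.factorial : ℚ) ≠ 0 := Nat.cast_ne_zero.mpr i.factorial_ne_zero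
    field_simp
  rw [hT, Finset.prod_div_distrib]
  have hden : ∏ i ∈ Finset.Icc 1 m, (2 * ((i : ℚ) + 1) * ((i.factorial : ℚ)) ^ 4) =
      2 ^ m * (((m + 1).factorial : ℚ)) * (∏ i ∈ Finset.Icc 1 m, (i.factorial : ℚ)) ^ 4 := by
    rw [Finset.prod_mul_distrib, Finset.prod_mul_distrib, Finset.prod_const,
        Nat.card_Icc, aux_prod_succ, Finset.prod_pow]
    norm_num
  rw [hden, ← keyK]
  have hA : (∏ i ∈ Finset.Icc 1 m, (i.factorial : ℚ)) ≠ 0 :=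
    Finset.prod_ne_zero_iff.mpr fun i _ => Nat.cast_ne_zero.mpr i.factorial_ne_zero
  have hBne : (∏ k ∈ Finset.range (m + 1), ((m + k).factorial : ℚ)) ≠ 0 :=
    Finset.prod_ne_zero_iff.mpr fun k _ => Nat.cast_ne_zero.mpr (m + k).factorial_ne_zero
  have hF : (((m + 1).factorial : ℚ)) ≠ 0 := Nat.cast_ne_zero.mpr (m + 1).factorial_ne_zero
  have h2 : (2 : ℚ) ^ m ≠ 0 := by positivity
  field_simp
end
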